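/- Degree-shift lemma, part (i): Let g = (g₁,...,g_m) and h = (h₁,...,h_s) be tuples of real polynomials such that each h_i lies in the truncated quadratic module Q(g)_{deg h_i + ℓ}. Then for every d, Q(h)_d ⊆ Q(g)_{d+ℓ}. -/

import Mathlib

open MvPolynomial

-- product of sums of squares is a sum of squares
lemma isSumSq_sq_mul {R : Type*} [CommRing R] (x : R) {b : R} (hb : IsSumSq b) :
    IsSumSq (x * x * b) := by
  induction hb with
  | zero => simpa using IsSumSq.zero
  | sq_add y pT ihT =>
    rw [mul_add]
    have : x * x * (y * y) = (x * y) * (x * y) := by ring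
    rw [this]
    exact IsSumSq.sq_add _ ihT

lemma isSumSq_mul_aux {R : Type*} [CommRing R] {a b : R} (ha : IsSumSq a) (hb : IsSumSq b) :
    IsSumSq (a * b) := by
  induction ha with
  | zero => simpa using IsSumSq.zero
  | sq_add x pS ih =>
    rw [add_mul]
    exact (isSumSq_sq_mul x hb).add ih

lemma exists_top_coeff {n : ℕ} {p : MvPolynomial (Fin n) ℝ} (hp : p ≠ 0) :
    ∃ d ∈ p.support, d.degree = p.totalDegree := by
  have h : p.support.Nonempty := by
    rwa [Finset.nonempty_iff_ne_empty, Ne, MvPolynomial.support_eq_empty]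
  obtain ⟨d, hd, hd2⟩ := Finset.exists_mem_eq_sup p.support h (fun d => d.degree)
  have : p.totalDegree = p.support.sup fun d => d.degree := rfl
  exact ⟨d, hd, by rw [this, hd2]⟩

lemma hc_top_ne_zero {n : ℕ} {p : MvPolynomial (Fin n) ℝ} (hp : p ≠ 0) :
    homogeneousComponent p.totalDegree p ≠ 0 := by
  obtain ⟨d, hd, hdeg⟩ := exists_top_coeff hp
  intro h
  have := coeff_homogeneousComponent (φ := p) (n := p.totalDegree) d
  rw [h, coeff_zero, if_pos hdeg] at this
  exact (mem_support_iff.mp hd) this.symm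

lemma totalDegree_mul_eq {n : ℕ} {p q : MvPolynomial (Fin n) ℝ} (hp : p ≠ 0) (hq : q ≠ 0) :
    (p * q).totalDegree = p.totalDegree + q.totalDegree := by
  refine le_antisymm (totalDegree_mul p q) ?_
  set a := p.totalDegree
  set b := q.totalDegree
  have key : homogeneousComponent (a + b) (p * q) =
      homogeneousComponent a p * homogeneousComponent b q := by
    conv_lhs => rw [← sum_homogeneousComponent p, ← sum_homogeneousComponent q,
      Finset.sum_mul_sum]
    rw [map_sum]
    simp only [map_sum]
    have step : ∀ i ∈ Finset.range (a + 1), ∀ j ∈ Finset.range (b + 1),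
        homogeneousComponent (a + b) (homogeneousComponent i p * homogeneousComponent j q)
        = if i = a then (if j = b then
            homogeneousComponent a p * homogeneousComponent b q else 0) else 0 := by
      intro i hi j hj
      rw [Finset.mem_range, Nat.lt_succ_iff] at hi hj
      rw [homogeneousComponent_of_mem ((mem_homogeneousSubmodule _ _).mpr
        ((homogeneousComponent_isHomogeneous i p).mul
          (homogeneousComponent_isHomogeneous j q)))]
      by_cases hia : i = a
      · by_cases hjb : j = b
        · subst hia; subst hjb; simp
        · rw [if_neg (by omega), if_pos hia, if_neg hjb]
      · rw [if_neg (by omega), if_neg hia]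
    rw [Finset.sum_congr rfl (fun i hi => Finset.sum_congr rfl (fun j hj => step i hi j hj))]
    simp
  have hne : homogeneousComponent (a + b) (p * q) ≠ 0 := by
    rw [key]
    exact mul_ne_zero (hc_top_ne_zero hp) (hc_top_ne_zero hq)
  by_contra hlt
  push_neg at hlt
  exact hne (homogeneousComponent_eq_zero _ _ hlt)

/-- The truncated quadratic module `Q(g)_r` generated by the tuple `g`,
    consisting of polynomials `σ₀ + ∑ i, σ i * g i` with each `σ` a sum of squares
    and `deg σ₀ ≤ r`, `deg (σ i * g i) ≤ r`. -/
def QMod {n m : ℕ} (g : Fin m → MvPolynomial (Fin n) ℝ) (r : ℕ) :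
    Set (MvPolynomial (Fin n) ℝ) :=
  {p | ∃ (σ₀ : MvPolynomial (Fin n) ℝ) (σ : Fin m → MvPolynomial (Fin n) ℝ),
    IsSumSq σ₀ ∧ σ₀.totalDegree ≤ r ∧
    (∀ i, IsSumSq (σ i)) ∧ (∀ i, (σ i * g i).totalDegree ≤ r) ∧
    p = σ₀ + ∑ i, σ i * g i}

lemma QMod_zero_mem {n m : ℕ} (g : Fin m → MvPolynomial (Fin n) ℝ) (r : ℕ) :
    (0 : MvPolynomial (Fin n) ℝ) ∈ QMod g r :=
  ⟨0, 0, IsSumSq.zero, by simp, fun i => IsSumSq.zero, fun i => by simp, by simp⟩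

lemma QMod_add_mem {n m : ℕ} {g : Fin m → MvPolynomial (Fin n) ℝ} {r : ℕ}
    {p q : MvPolynomial (Fin n) ℝ} (hp : p ∈ QMod g r) (hq : q ∈ QMod g r) :
    p + q ∈ QMod g r := by
  obtain ⟨σ₀, σ, hσ₀, hσ₀d, hσ, hσd, rfl⟩ := hp
  obtain ⟨τ₀, τ, hτ₀, hτ₀d, hτ, hτd, rfl⟩ := hq
  refine ⟨σ₀ + τ₀, fun i => σ i + τ i, hσ₀.add hτ₀,
    (totalDegree_add _ _).trans (max_le hσ₀d hτ₀d),
    fun i => (hσ i).add (hτ i),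
    fun i => by
      rw [add_mul]
      exact (totalDegree_add _ _).trans (max_le (hσd i) (hτd i)), ?_⟩
  simp only [add_mul, Finset.sum_add_distrib]
  ring

lemma QMod_mono {n m : ℕ} {g : Fin m → MvPolynomial (Fin n) ℝ} {r r' : ℕ} (h : r ≤ r') :
    QMod g r ⊆ QMod g r' := by
  rintro p ⟨σ₀, σ, h1, h2, h3, h4, rfl⟩
  exact ⟨σ₀, σ, h1, h2.trans h, h3, fun i => (h4 i).trans h, rfl⟩

lemma QMod_smul_mem {n m : ℕ} {g : Fin m → MvPolynomial (Fin n) ℝ} {r t : ℕ}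
    {τ p : MvPolynomial (Fin n) ℝ} (hτ : IsSumSq τ) (hτd : τ.totalDegree ≤ t)
    (hp : p ∈ QMod g r) : τ * p ∈ QMod g (t + r) := by
  obtain ⟨σ₀, σ, h1, h2, h3, h4, rfl⟩ := hp
  refine ⟨τ * σ₀, fun i => τ * σ i, isSumSq_mul_aux hτ h1,
    (totalDegree_mul _ _).trans (add_le_add hτd h2),
    fun i => isSumSq_mul_aux hτ (h3 i),
    fun i => by
      rw [mul_assoc]
      exact (totalDegree_mul _ _).trans (add_le_add hτd (h4 i)), ?_⟩
  rw [mul_add, Finset.mul_sum]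
  simp [mul_assoc]

theorem stmt_6 {n m s : ℕ} (g : Fin m → MvPolynomial (Fin n) ℝ)
    (h : Fin s → MvPolynomial (Fin n) ℝ) (ℓ : ℕ)
    (hshift : ∀ i, h i ∈ QMod g ((h i).totalDegree + ℓ)) (d : ℕ) :
    QMod h d ⊆ QMod g (d + ℓ) := by
  rintro p ⟨τ₀, τ, hτ₀, hτ₀d, hτ, hτd, rfl⟩
  have hbase : τ₀ ∈ QMod g (d + ℓ) :=
    ⟨τ₀, 0, hτ₀, hτ₀d.trans (Nat.le_add_right d ℓ), fun i => IsSumSq.zero,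
      fun i => by simp, by simp⟩
  refine QMod_add_mem hbase ?_
  refine Finset.sum_induction _ (· ∈ QMod g (d + ℓ))
    (fun a b ha hb => QMod_add_mem ha hb) (QMod_zero_mem g _) ?_
  intro i _
  by_cases hτi : τ i = 0
  · rw [hτi, zero_mul]; exact QMod_zero_mem g _
  by_cases hhi : h i = 0
  · rw [hhi, mul_zero]; exact QMod_zero_mem g _
  have hd : (τ i).totalDegree + (h i).totalDegree ≤ d := by
    rw [← totalDegree_mul_eq hτi hhi]; exact hτd i
  have := QMod_smul_mem (hτ i) le_rfl (hshift i)
  refine QMod_mono ?_ this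
  omega
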